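/- Let R ∈ ℝ^{m×m} and Q ∈ ℝ^{n×n} be symmetric positive definite with factorizations R⁻¹ = L_Rᵀ L_R and Q⁻¹ = L_Qᵀ L_Q (L_R, L_Q invertible). Suppose U_R ∈ ℝ^{m×m} satisfies U_Rᵀ R⁻¹ U_R = I_m, V_Q ∈ ℝ^{n×n} satisfies V_Qᵀ Q⁻¹ V_Q = I_n, and U_R⁻¹ A V_Q = Σ for some Σ ∈ ℝ^{m×n}. Then the matrices Û = L_R U_R and V̂ = L_Q⁻ᵀ V_Q⁻ᵀ are orthogonal (Ûᵀ Û = I_m and V̂ᵀ V̂ = I_n) and L_R A L_Q⁻¹ = Û Σ V̂ᵀ. In particular, the generalized singular value decomposition of A yields a singular value decomposition of the priorconditioned matrix Â = L_R A L_Q⁻¹ with the same matrix Σ. -/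

import Mathlib

open Matrix

theorem stmt_4 {m n : ℕ} (A : Matrix (Fin m) (Fin n) ℝ)
    (R LR UR : Matrix (Fin m) (Fin m) ℝ) (Q LQ VQ : Matrix (Fin n) (Fin n) ℝ)
    (Sg : Matrix (Fin m) (Fin n) ℝ)
    (hR : R.PosDef) (hQ : Q.PosDef)
    (hLR : R⁻¹ = LRᵀ * LR) (hLQ : Q⁻¹ = LQᵀ * LQ)
    (hLRu : IsUnit LR) (hLQu : IsUnit LQ)
    (hUR : URᵀ * R⁻¹ * UR = 1) (hVQ : VQᵀ * Q⁻¹ * VQ = 1)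
    (hGSVD : UR⁻¹ * A * VQ = Sg) :
    (LR * UR)ᵀ * (LR * UR) = 1 ∧
    ((LQᵀ)⁻¹ * (VQᵀ)⁻¹)ᵀ * ((LQᵀ)⁻¹ * (VQᵀ)⁻¹) = 1 ∧
    LR * A * LQ⁻¹ = (LR * UR) * Sg * ((LQᵀ)⁻¹ * (VQᵀ)⁻¹)ᵀ := by
  have hQu : IsUnit Q.det := isUnit_iff_ne_zero.mpr hQ.det_pos.ne'
  -- UR is a unit
  have hURd : IsUnit UR.det := by
    have h := congrArg Matrix.det hUR
    simp only [Matrix.det_mul, Matrix.det_transpose, Matrix.det_one] at h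
    exact IsUnit.of_mul_eq_one (a := UR.det) (R⁻¹.det * UR.det) (by linear_combination h)
  have hURu : IsUnit UR := (Matrix.isUnit_iff_isUnit_det _).mpr hURd
  -- VQ is a unit
  have hVQd : IsUnit VQ.det := by
    have h := congrArg Matrix.det hVQ
    simp only [Matrix.det_mul, Matrix.det_transpose, Matrix.det_one] at h
    exact IsUnit.of_mul_eq_one (a := VQ.det) (Q⁻¹.det * VQ.det) (by linear_combination h)
  have hVQu : IsUnit VQ := (Matrix.isUnit_iff_isUnit_det _).mpr hVQd
  have iUR : Invertible UR := hURu.invertible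
  have iVQ : Invertible VQ := hVQu.invertible
  have iLR : Invertible LR := hLRu.invertible
  have iLQ : Invertible LQ := hLQu.invertible
  have iQ : Invertible Q := ((Matrix.isUnit_iff_isUnit_det _).mpr hQu).invertible
  -- part 1
  have p1 : (LR * UR)ᵀ * (LR * UR) = 1 := by
    calc (LR * UR)ᵀ * (LR * UR) = URᵀ * (LRᵀ * LR) * UR := by
          simp [Matrix.transpose_mul, Matrix.mul_assoc]
      _ = 1 := by rw [← hLR]; exact hUR
  have hVQTd : IsUnit (VQᵀ).det := by simpa using hVQd
  -- Q = VQ * VQᵀ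
  have hQeq : Q = VQ * VQᵀ := by
    have h0 : VQᵀ * Q⁻¹ = VQ⁻¹ := by
      have h := congrArg (· * VQ⁻¹) hVQ
      simpa [Matrix.mul_assoc, Matrix.mul_nonsing_inv _ hVQd] using h
    have h1 : Q⁻¹ = (VQᵀ)⁻¹ * VQ⁻¹ := by
      rw [← h0, ← Matrix.mul_assoc, Matrix.nonsing_inv_mul _ hVQTd, Matrix.one_mul]
    have h2 : Q⁻¹ = (VQ * VQᵀ)⁻¹ := by
      rw [h1, Matrix.mul_inv_rev]
    calc Q = (Q⁻¹)⁻¹ := (Matrix.nonsing_inv_nonsing_inv _ hQu).symm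
      _ = ((VQ * VQᵀ)⁻¹)⁻¹ := by rw [h2]
      _ = VQ * VQᵀ := Matrix.nonsing_inv_nonsing_inv _ (by
            simpa [Matrix.det_mul] using (hVQd.mul hVQTd))
  -- part 2
  have p2 : ((LQᵀ)⁻¹ * (VQᵀ)⁻¹)ᵀ * ((LQᵀ)⁻¹ * (VQᵀ)⁻¹) = 1 := by
    have key : LQ⁻¹ * (LQᵀ)⁻¹ = Q := by
      rw [← Matrix.mul_inv_rev, ← hLQ, Matrix.nonsing_inv_nonsing_inv _ hQu]
    calc ((LQᵀ)⁻¹ * (VQᵀ)⁻¹)ᵀ * ((LQᵀ)⁻¹ * (VQᵀ)⁻¹)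
        = VQ⁻¹ * (LQ⁻¹ * (LQᵀ)⁻¹) * (VQᵀ)⁻¹ := by
          simp [Matrix.transpose_mul, Matrix.transpose_nonsing_inv, Matrix.mul_assoc]
      _ = VQ⁻¹ * (VQ * VQᵀ) * (VQᵀ)⁻¹ := by rw [key, hQeq]
      _ = 1 := by
          rw [← Matrix.mul_assoc, Matrix.nonsing_inv_mul _ hVQd, Matrix.one_mul,
            Matrix.mul_nonsing_inv _ hVQTd]
  refine ⟨p1, p2, ?_⟩
  -- part 3
  have hA : A = UR * Sg * VQ⁻¹ := by
    rw [← hGSVD]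
    rw [Matrix.mul_assoc, Matrix.mul_assoc, Matrix.mul_nonsing_inv _ hVQd, Matrix.mul_one,
      ← Matrix.mul_assoc, Matrix.mul_nonsing_inv _ hURd, Matrix.one_mul]
  rw [hA]
  simp [Matrix.transpose_mul, Matrix.transpose_nonsing_inv, Matrix.mul_assoc]
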